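/- Fusion identity for the Lax matrices of Q1 with δ=0: let L(y,x,a;c) denote the 2×2 complex matrix (1/(x−y))·[[a·y + c·(x−y), −a·x·y],[a, −a·x + c·(x−y)]]. For all complex numbers a, A, c and all complex x, X, y, z with y ≠ x, y ≠ X, y ≠ z, if the three-leg relation A/(y−X) − a/(y−x) = (A−a)/(y−z) holds, then L(X,y,A;c) · L(y,x,a;c) = c · L(z,y,A−a;c−a). -/

import Mathlib

set_option maxHeartbeats 1000000

/-- The Lax matrix `L(y, x, a; c)` of the quad-graph equation Q1 with δ = 0. -/
noncomputable def LaxQ1 (y x a c : ℂ) : Matrix (Fin 2) (Fin 2) ℂ :=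
  (1 / (x - y)) • !![a * y + c * (x - y), -(a * x * y); a, -(a * x) + c * (x - y)]

/-- Fusion identity for the Lax matrices of Q1 with δ = 0: if the three-leg
relation `A/(y−X) − a/(y−x) = (A−a)/(y−z)` holds, then
`L(X,y,A;c) · L(y,x,a;c) = c · L(z,y,A−a;c−a)`. -/
theorem lax_fusion_Q1_delta0 (a A c x X y z : ℂ)
    (hyx : y ≠ x) (hyX : y ≠ X) (hyz : y ≠ z)
    (h3leg : A / (y - X) - a / (y - x) = (A - a) / (y - z)) :
    LaxQ1 X y A c * LaxQ1 y x a c = c • LaxQ1 z y (A - a) (c - a) := by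
  have h1 : y - x ≠ 0 := sub_ne_zero.mpr hyx
  have h2 : y - X ≠ 0 := sub_ne_zero.mpr hyX
  have h3 : y - z ≠ 0 := sub_ne_zero.mpr hyz
  have h1' : x - y ≠ 0 := fun h => h1 (by linear_combination -h)
  have h3' : z - y ≠ 0 := fun h => h3 (by linear_combination -h)
  field_simp at h3leg
  ext i j
  fin_cases i <;> fin_cases j <;>
    simp only [LaxQ1, Matrix.mul_apply, Fin.sum_univ_succ, Fin.sum_univ_zero,
      Matrix.smul_apply, Matrix.cons_val', Matrix.cons_val_zero, Matrix.cons_val_one,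
      Matrix.head_cons, Matrix.head_fin_const, Matrix.empty_val', Matrix.cons_val_fin_one,
      smul_eq_mul, add_zero, Fin.zero_eta, Fin.mk_one, Matrix.of_apply, Matrix.cons_val_succ] <;>
    field_simp
  · linear_combination (-(c * y)) * h3leg
  · linear_combination (c * y ^ 2) * h3leg
  · linear_combination (-c) * h3leg
  · linear_combination (c * y) * h3leg
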